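/- A polynomial f ∈ R[X] maps to a unit of the Anderson ring R[X]_A under the canonical localization map R[X] → R[X]_A if and only if the constant term f(0) is a unit of R. Equivalently, the saturation of the multiplicative set A is exactly the set of polynomials over R whose constant term is a unit in R. -/

import Mathlib

open Polynomial

/-- The multiplicative set `A = {f ∈ R[X] : f(0) = 1}` of polynomials
with constant term `1`. -/
def andersonSubmonoid (R : Type*) [CommRing R] : Submonoid (Polynomial R) where
  carrier := {f | f.coeff 0 = 1}
  one_mem' := by simp
  mul_mem' := by
    intro a b ha hb
    simp only [Set.mem_setOf_eq, Polynomial.mul_coeff_zero] at *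
    rw [ha, hb, mul_one]

/-- The Anderson ring `R[X]_A`, the localization of `R[X]` at `A`. -/
abbrev AndersonRing (R : Type*) [CommRing R] := Localization (andersonSubmonoid R)

/-- The canonical ring homomorphism `R → R[X]_A`. -/
noncomputable def andersonMap (R : Type*) [CommRing R] : R →+* AndersonRing R :=
  (algebraMap (Polynomial R) (AndersonRing R)).comp Polynomial.C

/-- A polynomial `f ∈ R[X]` becomes a unit in the Anderson ring `R[X]_A` iff
its constant term `f(0)` is a unit in `R`; i.e. the saturation of `A` is the
set of polynomials whose constant term is a unit. -/
theorem anderson_isUnit_iff (R : Type*) [CommRing R] (f : Polynomial R) :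
    IsUnit (algebraMap (Polynomial R) (AndersonRing R) f) ↔ IsUnit (f.coeff 0) := by
  constructor
  · rintro hf
    obtain ⟨z, hz⟩ := isUnit_iff_exists_inv.mp hf
    obtain ⟨⟨g, s⟩, hgs⟩ := IsLocalization.surj (andersonSubmonoid R) z
    have key : algebraMap (Polynomial R) (AndersonRing R) (f * g) =
        algebraMap (Polynomial R) (AndersonRing R) (s : Polynomial R) := by
      rw [map_mul, ← hgs, ← mul_assoc, hz, one_mul]
    obtain ⟨c, hc⟩ := (IsLocalization.eq_iff_exists (andersonSubmonoid R) _).mp key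
    have h0 : (c : Polynomial R).coeff 0 * ((f * g).coeff 0) =
        (c : Polynomial R).coeff 0 * (s : Polynomial R).coeff 0 := by
      have := congrArg (fun p => Polynomial.coeff p 0) hc
      simpa [Polynomial.mul_coeff_zero] using this
    have hc0 : (c : Polynomial R).coeff 0 = 1 := c.2
    have hs0 : (s : Polynomial R).coeff 0 = 1 := s.2
    rw [hc0, one_mul, one_mul, hs0, Polynomial.mul_coeff_zero] at h0
    exact (Units.mkOfMulEqOne _ _ h0).isUnit
  · rintro ⟨u, hu⟩
    have hmem : Polynomial.C (↑u⁻¹ : R) * f ∈ andersonSubmonoid R := by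
      show (Polynomial.C (↑u⁻¹ : R) * f).coeff 0 = 1
      simp [Polynomial.mul_coeff_zero, ← hu]
    have h1 : IsUnit (algebraMap (Polynomial R) (AndersonRing R)
        (Polynomial.C (↑u⁻¹ : R) * f)) :=
      IsLocalization.map_units (AndersonRing R) ⟨_, hmem⟩
    have h2 : IsUnit (algebraMap (Polynomial R) (AndersonRing R)
        (Polynomial.C (↑u⁻¹ : R))) := by
      apply IsUnit.map
      exact (Polynomial.isUnit_C.mpr u⁻¹.isUnit)
    rw [map_mul] at h1
    exact (IsUnit.mul_iff.mp h1).2
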